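/- Let J ≥ 1, R > 0, L ≥ 0, and let θ : ℝ → ℝ satisfy 0 ≤ θ(x) ≤ 1 for all x, θ(x) = 0 for all x ≥ 2, and |θ(x) − θ(y)| ≤ L|x − y| for all x, y. Then the map G_R : ℂ^J → ℂ^J defined by G_R(v) = θ(‖v‖/R) F(v) v (i.e. componentwise G_R(v)_j = θ(‖v‖/R) |v_j|² v_j) is globally Lipschitz: ‖G_R(u) − G_R(v)‖ ≤ (12 + 8L) R² ‖u − v‖ for all u, v ∈ ℂ^J. -/

import Mathlib

set_option maxHeartbeats 1000000

open Finset

lemma NN_eq (J : ℕ) (w : Fin J → ℂ) :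
    Real.sqrt (∑ j, (‖w j‖) ^ 2) = ‖(WithLp.equiv 2 (Fin J → ℂ)).symm w‖ := by
  rw [EuclideanSpace.norm_eq]
  simp

lemma NN_triangle (J : ℕ) (a b : Fin J → ℂ) :
    Real.sqrt (∑ j, (‖a j + b j‖) ^ 2)
      ≤ Real.sqrt (∑ j, (‖a j‖) ^ 2) + Real.sqrt (∑ j, (‖b j‖) ^ 2) := by
  have h := NN_eq J (fun j => a j + b j)
  rw [h, NN_eq, NN_eq]
  exact norm_add_le ((WithLp.equiv 2 (Fin J → ℂ)).symm a) ((WithLp.equiv 2 (Fin J → ℂ)).symm b)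

lemma NN_rev (J : ℕ) (u v : Fin J → ℂ) :
    |Real.sqrt (∑ j, (‖u j‖) ^ 2) - Real.sqrt (∑ j, (‖v j‖) ^ 2)|
      ≤ Real.sqrt (∑ j, (‖u j - v j‖) ^ 2) := by
  have h := NN_eq J (fun j => u j - v j)
  rw [h, NN_eq, NN_eq]
  exact abs_norm_sub_norm_le ((WithLp.equiv 2 (Fin J → ℂ)).symm u)
    ((WithLp.equiv 2 (Fin J → ℂ)).symm v)

lemma comp_le (J : ℕ) (w : Fin J → ℂ) (j : Fin J) :
    ‖w j‖ ≤ Real.sqrt (∑ i, (‖w i‖) ^ 2) := by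
  have h1 : (‖w j‖)^2 ≤ ∑ i, (‖w i‖) ^ 2 :=
    Finset.single_le_sum (f := fun i => (‖w i‖)^2) (fun i _ => sq_nonneg _)
      (Finset.mem_univ j)
  calc ‖w j‖ = Real.sqrt ((‖w j‖)^2) :=
        (Real.sqrt_sq (norm_nonneg _)).symm
    _ ≤ _ := Real.sqrt_le_sqrt h1

lemma sqrt_sum_sq_le (J : ℕ) (f g : Fin J → ℝ) (C : ℝ) (hC : 0 ≤ C)
    (hf : ∀ j, 0 ≤ f j) (h : ∀ j, f j ≤ C * g j) :
    Real.sqrt (∑ j, f j ^ 2) ≤ C * Real.sqrt (∑ j, g j ^ 2) := by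
  calc Real.sqrt (∑ j, f j ^ 2) ≤ Real.sqrt (∑ j, (C * g j) ^ 2) := by
        apply Real.sqrt_le_sqrt
        exact Finset.sum_le_sum fun j _ => pow_le_pow_left₀ (hf j) (h j) 2
    _ = Real.sqrt (C ^ 2 * ∑ j, g j ^ 2) := by
        congr 1
        rw [Finset.mul_sum]
        exact Finset.sum_congr rfl fun j _ => by ring
    _ = C * Real.sqrt (∑ j, g j ^ 2) := by
        rw [Real.sqrt_mul (sq_nonneg C), Real.sqrt_sq hC]

lemma cubic_bound (a b : ℂ) :
    ‖((‖a‖ : ℂ)) ^ 2 * a - ((‖b‖ : ℂ)) ^ 2 * b‖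
      ≤ ((‖a‖) ^ 2 + ‖a‖ * ‖b‖ + (‖b‖) ^ 2)
        * ‖a - b‖ := by
  have key : ((‖a‖ : ℂ)) ^ 2 * a - ((‖b‖ : ℂ)) ^ 2 * b
      = ((‖a‖ : ℂ)) ^ 2 * (a - b)
        + (((‖a‖ : ℂ)) ^ 2 - ((‖b‖ : ℂ)) ^ 2) * b := by ring
  rw [key]
  have h1 := norm_add_le (((‖a‖ : ℂ)) ^ 2 * (a - b))
    ((((‖a‖ : ℂ)) ^ 2 - ((‖b‖ : ℂ)) ^ 2) * b)
  rw [norm_mul, norm_mul] at h1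
  have h2 : ‖((‖a‖ : ℂ)) ^ 2‖ = (‖a‖) ^ 2 := by
    rw [norm_pow, Complex.norm_real, norm_norm]
  have h3 : ‖(((‖a‖ : ℂ)) ^ 2 - ((‖b‖ : ℂ)) ^ 2)‖
      = |(‖a‖) ^ 2 - (‖b‖) ^ 2| := by
    rw [show ((‖a‖ : ℂ)) ^ 2 - ((‖b‖ : ℂ)) ^ 2
        = (((‖a‖) ^ 2 - (‖b‖) ^ 2 : ℝ) : ℂ) by push_cast; ring,
      Complex.norm_real, Real.norm_eq_abs]
  have h4 : |(‖a‖) ^ 2 - (‖b‖) ^ 2|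
      ≤ (‖a‖ + ‖b‖) * ‖a - b‖ := by
    have h5 : |‖a‖ - ‖b‖| ≤ ‖a - b‖ :=
      abs_norm_sub_norm_le a b
    have h6 : (‖a‖) ^ 2 - (‖b‖) ^ 2
        = (‖a‖ + ‖b‖) * (‖a‖ - ‖b‖) := by ring
    rw [h6, abs_mul, abs_of_nonneg (by positivity)]
    exact mul_le_mul_of_nonneg_left h5 (by positivity)
  rw [h2, h3] at h1
  have hb : ‖b‖ ≥ 0 := norm_nonneg b
  nlinarith [norm_nonneg (a - b), norm_nonneg a,
    mul_le_mul_of_nonneg_right h4 hb]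

lemma stmt_12_aux (J : ℕ) (R L : ℝ) (hR : 0 < R) (hL : 0 ≤ L)
    (θ : ℝ → ℝ) (hθ01 : ∀ x, 0 ≤ θ x ∧ θ x ≤ 1) (hθ0 : ∀ x, 2 ≤ x → θ x = 0)
    (hθL : ∀ x y : ℝ, |θ x - θ y| ≤ L * |x - y|)
    (G : (Fin J → ℂ) → (Fin J → ℂ))
    (hG : ∀ (v : Fin J → ℂ) (j : Fin J),
      G v j = ((θ (Real.sqrt (∑ i, (‖v i‖) ^ 2) / R) : ℝ) : ℂ)
        * ((‖v j‖ : ℂ)) ^ 2 * v j)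
    (u v : Fin J → ℂ)
    (hle : Real.sqrt (∑ i, (‖v i‖) ^ 2) ≤ Real.sqrt (∑ i, (‖u i‖) ^ 2)) :
    Real.sqrt (∑ j, (‖G u j - G v j‖) ^ 2)
      ≤ (12 + 8 * L) * R ^ 2 * Real.sqrt (∑ j, (‖u j - v j‖) ^ 2) := by
  set nu := Real.sqrt (∑ i, (‖u i‖) ^ 2) with hnu
  set nv := Real.sqrt (∑ i, (‖v i‖) ^ 2) with hnv
  set d := Real.sqrt (∑ j, (‖u j - v j‖) ^ 2) with hd
  have hd0 : 0 ≤ d := Real.sqrt_nonneg _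
  have hnv0 : 0 ≤ nv := Real.sqrt_nonneg _
  have hcompu : ∀ j, ‖u j‖ ≤ nu := fun j => comp_le J u j
  have hcompv : ∀ j, ‖v j‖ ≤ nv := fun j => comp_le J v j
  have hrev : |nu - nv| ≤ d := NN_rev J u v
  clear_value nu nv d
  by_cases hbig : 2 * R < nv
  · -- both norms large, G u = G v = 0
    have hzv : θ (nv / R) = 0 := hθ0 _ ((le_div_iff₀ hR).mpr (by linarith))
    have hzu : θ (nu / R) = 0 := hθ0 _ ((le_div_iff₀ hR).mpr (by linarith))
    have hzero : ∀ j, G u j - G v j = 0 := by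
      intro j
      rw [hG, hG, ← hnu, ← hnv, hzu, hzv]
      simp
    have : Real.sqrt (∑ j, (‖G u j - G v j‖) ^ 2) = 0 := by
      simp [hzero]
    rw [this]
    have hc : (0:ℝ) ≤ (12 + 8 * L) * R ^ 2 := by positivity
    exact mul_nonneg hc hd0
  · replace hbig : nv ≤ 2 * R := not_lt.mp hbig
    set θu := θ (nu / R) with hθu
    set θv := θ (nv / R) with hθv
    have hθu0 : 0 ≤ θu := (hθ01 _).1
    have hθu1 : θu ≤ 1 := (hθ01 _).2
    set a : Fin J → ℂ := fun j =>
      (θu : ℂ) * (((‖u j‖ : ℂ)) ^ 2 * u j - ((‖v j‖ : ℂ)) ^ 2 * v j)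
      with ha
    set b : Fin J → ℂ := fun j =>
      ((θu - θv : ℝ) : ℂ) * (((‖v j‖ : ℂ)) ^ 2 * v j) with hb
    have hsplit : ∀ j, G u j - G v j = a j + b j := by
      intro j
      rw [hG, hG, ← hnu, ← hnv, ha, hb]
      push_cast
      ring
    -- bound on a
    have habound : ∀ j, ‖a j‖ ≤ 12 * R ^ 2 * ‖u j - v j‖ := by
      intro j
      rw [ha]
      simp only [norm_mul, Complex.norm_real, Real.norm_eq_abs, abs_of_nonneg hθu0]
      by_cases hz : θu = 0
      · rw [hz]
        simp only [zero_mul]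
        positivity
      · have hnu2R : nu ≤ 2 * R := by
          by_contra hcon
          push_neg at hcon
          exact hz (hθ0 _ ((le_div_iff₀ hR).mpr (by linarith)))
        have hcu := hcompu j
        have hcv := hcompv j
        have hcb := cubic_bound (u j) (v j)
        have h1 : ‖u j‖ ≤ 2 * R := le_trans hcu hnu2R
        have h2 : ‖v j‖ ≤ 2 * R := le_trans hcv (le_trans hle hnu2R)
        have h3 : (‖u j‖) ^ 2 + ‖u j‖ * ‖v j‖
            + (‖v j‖) ^ 2 ≤ 12 * R ^ 2 := by
          nlinarith [norm_nonneg (u j), norm_nonneg (v j)]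
        calc θu * ‖((‖u j‖ : ℂ)) ^ 2 * u j
              - ((‖v j‖ : ℂ)) ^ 2 * v j‖
            ≤ 1 * (((‖u j‖) ^ 2 + ‖u j‖ * ‖v j‖
              + (‖v j‖) ^ 2) * ‖u j - v j‖) := by
              apply mul_le_mul hθu1 (le_trans hcb (le_refl _)) (norm_nonneg _) zero_le_one
          _ ≤ 12 * R ^ 2 * ‖u j - v j‖ := by
              rw [one_mul]
              exact mul_le_mul_of_nonneg_right h3 (norm_nonneg _)
    -- bound on b
    have hθdiff : |θu - θv| ≤ L * d / R := by
      have h1 := hθL (nu / R) (nv / R)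
      have h2 : |nu / R - nv / R| = |nu - nv| / R := by
        rw [div_sub_div_same, abs_div, abs_of_pos hR]
      have h3 : |nu - nv| ≤ d := hrev
      rw [h2] at h1
      calc |θu - θv| ≤ L * (|nu - nv| / R) := h1
        _ ≤ L * (d / R) := by gcongr
        _ = L * d / R := by ring
    have hbbound : ∀ j, ‖b j‖
        ≤ (4 * (L * d / R) * R ^ 2) * ‖v j‖ := by
      intro j
      have h2 : ‖v j‖ ≤ 2 * R := le_trans (hcompv j) hbig
      have hvn : 0 ≤ ‖v j‖ := norm_nonneg _
      have hLdR : 0 ≤ L * d / R := by positivity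
      rw [hb, norm_mul, norm_mul, norm_pow, Complex.norm_real, Complex.norm_real,
        norm_norm, Real.norm_eq_abs]
      have key1 : |θu - θv| * (‖v j‖ ^ 2 * ‖v j‖)
          ≤ (L * d / R) * (‖v j‖ ^ 2 * ‖v j‖) :=
        mul_le_mul_of_nonneg_right hθdiff (by positivity)
      have key2 : ‖v j‖ ^ 2 * ‖v j‖
          ≤ 4 * R ^ 2 * ‖v j‖ := by
        have hx2 : ‖v j‖ * ‖v j‖ ≤ (2 * R) * (2 * R) :=
          mul_le_mul h2 h2 hvn (by linarith)
        nlinarith [mul_le_mul_of_nonneg_right hx2 hvn]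
      calc |θu - θv| * (‖v j‖ ^ 2 * ‖v j‖)
          ≤ (L * d / R) * (‖v j‖ ^ 2 * ‖v j‖) := key1
        _ ≤ (L * d / R) * (4 * R ^ 2 * ‖v j‖) :=
            mul_le_mul_of_nonneg_left key2 hLdR
        _ = 4 * (L * d / R) * R ^ 2 * ‖v j‖ := by ring
    -- assemble
    have hLHS : Real.sqrt (∑ j, (‖G u j - G v j‖) ^ 2)
        = Real.sqrt (∑ j, (‖a j + b j‖) ^ 2) := by
      congr 1
      exact Finset.sum_congr rfl fun j _ => by rw [hsplit j]
    have hNa : Real.sqrt (∑ j, (‖a j‖) ^ 2) ≤ 12 * R ^ 2 * d := by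
      rw [hd]
      exact sqrt_sum_sq_le J (fun j => ‖a j‖) (fun j => ‖u j - v j‖)
        (12 * R ^ 2) (by positivity) (fun j => norm_nonneg _) habound
    have hNb : Real.sqrt (∑ j, (‖b j‖) ^ 2) ≤ (4 * (L * d / R) * R ^ 2) * nv := by
      rw [hnv]
      exact sqrt_sum_sq_le J (fun j => ‖b j‖) (fun j => ‖v j‖)
        (4 * (L * d / R) * R ^ 2) (by positivity) (fun j => norm_nonneg _) hbbound
    have htri := NN_triangle J a b
    rw [hLHS]
    have hfinal : 4 * (L * d / R) * R ^ 2 * nv ≤ 8 * L * R ^ 2 * d := by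
      have h1 : 4 * (L * d / R) * R ^ 2 * nv = 4 * L * d * R * nv := by
        field_simp
      rw [h1]
      nlinarith [mul_nonneg (mul_nonneg hL hd0) hR.le]
    calc Real.sqrt (∑ j, (‖a j + b j‖) ^ 2)
        ≤ Real.sqrt (∑ j, (‖a j‖) ^ 2)
          + Real.sqrt (∑ j, (‖b j‖) ^ 2) := htri
      _ ≤ 12 * R ^ 2 * d + 8 * L * R ^ 2 * d := by linarith
      _ = (12 + 8 * L) * R ^ 2 * d := by ring

/-- global Lipschitz continuity of the truncated nonlinearity
`G_R(v)_j = θ(‖v‖/R) |v_j|² v_j`: if `0 ≤ θ ≤ 1`, `θ(x) = 0` for `x ≥ 2` and `θ`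
is `L`-Lipschitz, then `‖G_R(u) - G_R(v)‖ ≤ (12 + 8L) R² ‖u - v‖` for all `u, v ∈ ℂ^J`. -/
theorem stmt_12 (J : ℕ) (hJ : 1 ≤ J) (R L : ℝ) (hR : 0 < R) (hL : 0 ≤ L)
    (θ : ℝ → ℝ) (hθ01 : ∀ x, 0 ≤ θ x ∧ θ x ≤ 1) (hθ0 : ∀ x, 2 ≤ x → θ x = 0)
    (hθL : ∀ x y : ℝ, |θ x - θ y| ≤ L * |x - y|)
    (G : (Fin J → ℂ) → (Fin J → ℂ))
    (hG : ∀ (v : Fin J → ℂ) (j : Fin J),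
      G v j = ((θ (Real.sqrt (∑ i, (‖v i‖) ^ 2) / R) : ℝ) : ℂ)
        * ((‖v j‖ : ℂ)) ^ 2 * v j) :
    ∀ u v : Fin J → ℂ,
      Real.sqrt (∑ j, (‖G u j - G v j‖) ^ 2)
        ≤ (12 + 8 * L) * R ^ 2 * Real.sqrt (∑ j, (‖u j - v j‖) ^ 2) := by
  intro u v
  rcases le_total (Real.sqrt (∑ i, (‖v i‖) ^ 2))
      (Real.sqrt (∑ i, (‖u i‖) ^ 2)) with h | h
  · exact stmt_12_aux J R L hR hL θ hθ01 hθ0 hθL G hG u v h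
  · have key := stmt_12_aux J R L hR hL θ hθ01 hθ0 hθL G hG v u h
    have e1 : Real.sqrt (∑ j, (‖G u j - G v j‖) ^ 2)
        = Real.sqrt (∑ j, (‖G v j - G u j‖) ^ 2) := by
      congr 1
      exact Finset.sum_congr rfl fun j _ => by rw [norm_sub_rev]
    have e2 : Real.sqrt (∑ j, (‖u j - v j‖) ^ 2)
        = Real.sqrt (∑ j, (‖v j - u j‖) ^ 2) := by
      congr 1
      exact Finset.sum_congr rfl fun j _ => by rw [norm_sub_rev]
    rw [e1, e2]
    exact key
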